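/- arXiv:2006.16961 — 3 statements merged into one kernel-verified Lean document; each statement's English description precedes it below -/
import Mathlib

section
/- Let u ≤ 0 be subharmonic on a domain Ω ⊂ ℝ^m, and suppose B(q_1, 3R), …, B(q_k, 3R) ⊂ Ω is a chain of balls with B(q_j, R) ∩ B(q_{j+1}, R) ≠ ∅ for each j. If sup over B(q_1,R) of u is ≥ −C_0, then the average of |u| over each B(q_j, R) is bounded by a constant depending only on m, k, C_0. -/
open MeasureTheory

/-- Sub-mean-value property over closed balls contained in `s`. -/
def SubmeanOn {E : Type*} [NormedAddCommGroup E] [MeasureSpace E]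
    (u : E → ℝ) (s : Set E) : Prop :=
  ∀ y r, 0 < r → Metric.closedBall y r ⊆ s →
    u y ≤ ⨍ x in Metric.closedBall y r, u x

section Aux

open Metric

variable {m : ℕ}

local notation "E" => EuclideanSpace ℝ (Fin m)

/-- volume comparison between a closed ball of radius `r` and an open ball of radius `s`. -/
lemma aux_vol_ratio (y c : E) {r s : ℝ} (hr : 0 ≤ r) (hs : 0 < s) :
    (volume (closedBall y r)).toReal = (r / s) ^ m * (volume (ball c s)).toReal := by
  rw [Measure.addHaar_closedBall volume y hr, Measure.addHaar_ball_of_pos volume c hs,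
    finrank_euclideanSpace_fin, ENNReal.toReal_mul, ENNReal.toReal_mul,
    ENNReal.toReal_ofReal (pow_nonneg hr m), ENNReal.toReal_ofReal (pow_nonneg hs.le m)]
  rw [div_pow, ← mul_assoc, div_mul_cancel₀]
  positivity

/-- Claim A: integral bound from a point value via the sub-mean inequality. -/
lemma aux_claimA {u : E → ℝ} {Ω : Set E}
    (hsub : SubmeanOn u Ω) (hneg : ∀ x ∈ Ω, u x ≤ 0) (hint : IntegrableOn u Ω)
    {y : E} {r A : ℝ} (hr : 0 < r) (hy : closedBall y r ⊆ Ω) (hA : -A ≤ u y)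
    {S : Set E} (hSsub : S ⊆ closedBall y r) :
    ∫ x in S, -u x ≤ (volume (closedBall y r)).toReal * A := by
  have hball_int : IntegrableOn (fun x => -u x) (closedBall y r) :=
    (hint.mono_set hy).neg
  have hnonneg : 0 ≤ᵐ[volume.restrict (closedBall y r)] fun x => -u x :=
    ae_restrict_of_forall_mem measurableSet_closedBall
      (fun x hx => neg_nonneg.2 (hneg x (hy hx)))
  have h1 : ∫ x in S, -u x ≤ ∫ x in closedBall y r, -u x :=
    setIntegral_mono_set hball_int hnonneg (HasSubset.Subset.eventuallyLE hSsub)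
  have h3 : u y ≤ ⨍ x in closedBall y r, u x := hsub y r hr hy
  rw [setAverage_eq] at h3
  set V := (volume (closedBall y r)).toReal with hV
  have hVpos : 0 < V :=
    ENNReal.toReal_pos (measure_closedBall_pos volume y hr).ne'
      measure_closedBall_lt_top.ne
  have h4 : V * u y ≤ ∫ x in closedBall y r, u x := by
    have := mul_le_mul_of_nonneg_left h3 hVpos.le
    change V * u y ≤ V * (V⁻¹ • ∫ x in closedBall y r, u x) at this
    rwa [smul_eq_mul, ← mul_assoc, mul_inv_cancel₀ hVpos.ne', one_mul] at this
  have h5 : ∫ x in closedBall y r, -u x ≤ V * A := by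
    rw [integral_neg]
    have : -A ≤ u y := hA
    nlinarith
  linarith

/-- Markov-type extraction of a good point from an integral bound. -/
lemma aux_markov {S : Set E} (hS : MeasurableSet S) (h0 : volume S ≠ 0)
    (hT : volume S ≠ ⊤) {g : E → ℝ} (hg : IntegrableOn g S) {M : ℝ}
    (hM : ∫ x in S, g x ≤ (volume S).toReal * M) :
    ∃ z ∈ S, g z ≤ M + 1 := by
  by_contra h
  push_neg at h
  have hge : (M + 1) * (volume S).toReal ≤ ∫ x in S, g x :=
    setIntegral_ge_of_const_le_real hS hT (fun x hx => (h x hx).le) hg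
  have hVpos : 0 < (volume S).toReal := ENNReal.toReal_pos h0 hT
  nlinarith

/-- The workhorse: from a point lower bound on `u`, get an average bound for `-u`
on any ball inside a closed ball around the point that is contained in `Ω`. -/
lemma aux_step {u : E → ℝ} {Ω : Set E}
    (hsub : SubmeanOn u Ω) (hneg : ∀ x ∈ Ω, u x ≤ 0) (hint : IntegrableOn u Ω)
    {y : E} {r A : ℝ} (hr : 0 < r) (hy : closedBall y r ⊆ Ω) (hA : -A ≤ u y)
    {c : E} {s : ℝ} (hs : 0 < s) (hSsub : ball c s ⊆ closedBall y r) :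
    ∫ x in ball c s, -u x ≤ (volume (ball c s)).toReal * ((r / s) ^ m * A) := by
  have h := aux_claimA hsub hneg hint hr hy hA hSsub
  rw [aux_vol_ratio y c hr.le hs] at h
  calc ∫ x in ball c s, -u x ≤ (r / s) ^ m * (volume (ball c s)).toReal * A := h
    _ = (volume (ball c s)).toReal * ((r / s) ^ m * A) := by ring

lemma aux_step_point {u : E → ℝ} {Ω : Set E}
    (hsub : SubmeanOn u Ω) (hneg : ∀ x ∈ Ω, u x ≤ 0) (hint : IntegrableOn u Ω)
    {y : E} {r A : ℝ} (hr : 0 < r) (hy : closedBall y r ⊆ Ω) (hA : -A ≤ u y)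
    {c : E} {s : ℝ} (hs : 0 < s) (hSsub : ball c s ⊆ closedBall y r) :
    ∃ z ∈ ball c s, -u z ≤ (r / s) ^ m * A + 1 := by
  refine aux_markov measurableSet_ball (measure_ball_pos volume c hs).ne'
    measure_ball_lt_top.ne ((hint.mono_set (hSsub.trans hy)).neg) ?_
  exact aux_step hsub hneg hint hr hy hA hs hSsub

end Aux

/-- along a chain of overlapping balls whose triples lie in the domain,
an almost-maximum bound `sup_{B(q_1,R)} u ≥ -C₀` for a nonpositive subharmonic `u`
propagates to a uniform `L¹`-average bound on every ball of the chain, with a constant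
depending only on the dimension `m`, the chain length `k` and `C₀`. -/
theorem chain_of_balls_L1_bound (m k : ℕ) (C₀ : ℝ) :
    ∃ C : ℝ, ∀ (Ω : Set (EuclideanSpace ℝ (Fin m)))
      (u : EuclideanSpace ℝ (Fin m) → ℝ)
      (q : Fin (k + 1) → EuclideanSpace ℝ (Fin m)) (R : ℝ),
      0 < R →
      SubmeanOn u Ω →
      (∀ x ∈ Ω, u x ≤ 0) →
      IntegrableOn u Ω →
      (∀ j, Metric.ball (q j) (3 * R) ⊆ Ω) →
      (∀ j : Fin k, (Metric.ball (q j.castSucc) R ∩ Metric.ball (q j.succ) R).Nonempty) →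
      -C₀ ≤ ⨆ y : Metric.ball (q 0) R, u (y : EuclideanSpace ℝ (Fin m)) →
      ∀ j, ⨍ x in Metric.ball (q j) R, |u x| ≤ C := by
  classical
  set f : ℕ → ℝ := fun n => Nat.rec (|C₀| + 1)
    (fun _ a => (4 : ℝ) ^ m * ((4 : ℝ) ^ m * a + 1) + 1) n with hf
  have hf0 : f 0 = |C₀| + 1 := rfl
  have hfsucc : ∀ n, f (n + 1) = (4 : ℝ) ^ m * ((4 : ℝ) ^ m * f n + 1) + 1 := fun n => rfl
  have hfpos : ∀ n, 0 < f n := by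
    intro n
    induction n with
    | zero => have := abs_nonneg C₀; rw [hf0]; linarith
    | succ n ih =>
      rw [hfsucc]
      have h4m : (0 : ℝ) < (4 : ℝ) ^ m := by positivity
      have h2 : 0 < (4 : ℝ) ^ m * ((4 : ℝ) ^ m * f n + 1) :=
        mul_pos h4m (by nlinarith)
      linarith
  have hfmono : Monotone f := by
    apply monotone_nat_of_le_succ
    intro n
    rw [hfsucc]
    have h4 : (1 : ℝ) ≤ (4 : ℝ) ^ m := one_le_pow₀ (by norm_num)
    have h1 : f n ≤ (4 : ℝ) ^ m * f n := le_mul_of_one_le_left (hfpos n).le h4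
    have h2 : (4 : ℝ) ^ m * f n ≤ (4 : ℝ) ^ m * ((4 : ℝ) ^ m * f n + 1) :=
      mul_le_mul_of_nonneg_left (by linarith) (by positivity)
    linarith
  refine ⟨(2 : ℝ) ^ m * f k, ?_⟩
  intro Ω u q R hR hsub hneg hint hball hchain hsup
  -- invariant : a good point in each ball of the chain
  have key : ∀ n : ℕ, ∀ hn : n < k + 1,
      ∃ z ∈ Metric.ball (q ⟨n, hn⟩) R, -u z ≤ f n := by
    intro n
    induction n with
    | zero =>
      intro hn
      haveI : Nonempty (Metric.ball (q 0) R) :=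
        (Metric.nonempty_ball.2 hR).to_subtype
      have hlt : -(|C₀| + 1) < ⨆ y : Metric.ball (q 0) R, u (y : EuclideanSpace ℝ (Fin m)) := by
        have : -(|C₀| + 1) < -C₀ := by
          have := le_abs_self C₀
          linarith
        exact lt_of_lt_of_le this hsup
      obtain ⟨⟨z, hz⟩, hzlt⟩ := exists_lt_of_lt_ciSup hlt
      exact ⟨z, by simpa using hz, by rw [hf0]; linarith⟩
    | succ n ih =>
      intro hn
      have hnk : n < k := Nat.lt_of_succ_lt_succ hn
      have hn' : n < k + 1 := Nat.lt_of_lt_of_le hnk (Nat.le_succ k)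
      obtain ⟨z, hz, hzval⟩ := ih hn'
      obtain ⟨p, hp1, hp2⟩ := hchain ⟨n, hnk⟩
      have hcast : (Fin.castSucc ⟨n, hnk⟩ : Fin (k + 1)) = ⟨n, hn'⟩ := rfl
      have hsuccfin : ((⟨n, hnk⟩ : Fin k).succ : Fin (k + 1)) = ⟨n + 1, hn⟩ := rfl
      rw [hcast] at hp1
      rw [hsuccfin] at hp2
      set Q := q (⟨n, hn'⟩ : Fin (k + 1)) with hQ
      set Q' := q (⟨n + 1, hn⟩ : Fin (k + 1)) with hQ'
      -- hop 1 : from z to a point z1 near p, still in ball Q R and in ball p R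
      have hzΩ : Metric.closedBall z (2 * R) ⊆ Ω := by
        refine Set.Subset.trans ?_ (hball (⟨n, hn'⟩ : Fin (k + 1)))
        intro x hx
        have h1 : dist x z ≤ 2 * R := Metric.mem_closedBall.1 hx
        have h2 : dist z Q < R := Metric.mem_ball.1 hz
        have : dist x Q < 3 * R := by
          calc dist x Q ≤ dist x z + dist z Q := dist_triangle _ _ _
          _ < 2 * R + R := by linarith
          _ = 3 * R := by ring
        exact Metric.mem_ball.2 this
      set c₁ := midpoint ℝ p Q with hc₁
      have hc₁p : dist c₁ p = dist p Q / 2 := by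
        rw [hc₁, dist_midpoint_left, Real.norm_two]
        ring
      have hc₁Q : dist c₁ Q = dist p Q / 2 := by
        rw [hc₁, dist_midpoint_right, Real.norm_two]
        ring
      have hpQ : dist p Q < R := Metric.mem_ball.1 hp1
      have hS1 : Metric.ball c₁ (R / 2) ⊆ Metric.closedBall z (2 * R) := by
        intro x hx
        have h1 : dist x c₁ < R / 2 := Metric.mem_ball.1 hx
        have h2 : dist z Q < R := Metric.mem_ball.1 hz
        have : dist x z ≤ dist x c₁ + dist c₁ Q + dist Q z := dist_triangle4 _ _ _ _
        rw [Metric.mem_closedBall]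
        rw [dist_comm z Q] at h2
        rw [hc₁Q] at this
        linarith
      obtain ⟨z1, hz1, hz1val⟩ := aux_step_point hsub hneg hint
        (by linarith : (0:ℝ) < 2 * R) hzΩ (by linarith : -(f n) ≤ u z)
        (by linarith : (0:ℝ) < R / 2) hS1
      have hratio : ((2 * R) / (R / 2)) = (4 : ℝ) := by
        field_simp; ring
      rw [hratio] at hz1val
      -- z1 is in ball Q R and ball p R
      have hz1Q : z1 ∈ Metric.ball Q R := by
        have h1 : dist z1 c₁ < R / 2 := Metric.mem_ball.1 hz1
        have : dist z1 Q ≤ dist z1 c₁ + dist c₁ Q := dist_triangle _ _ _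
        rw [hc₁Q] at this
        exact Metric.mem_ball.2 (by linarith)
      have hz1p : dist z1 p < R := by
        have h1 : dist z1 c₁ < R / 2 := Metric.mem_ball.1 hz1
        have : dist z1 p ≤ dist z1 c₁ + dist c₁ p := dist_triangle _ _ _
        rw [hc₁p] at this
        linarith
      -- hop 2 : from z1 to a point z2 in ball Q' R
      have hz1Ω : Metric.closedBall z1 (2 * R) ⊆ Ω := by
        refine Set.Subset.trans ?_ (hball (⟨n, hn'⟩ : Fin (k + 1)))
        intro x hx
        have h1 : dist x z1 ≤ 2 * R := Metric.mem_closedBall.1 hx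
        have h2 : dist z1 Q < R := Metric.mem_ball.1 hz1Q
        have : dist x Q < 3 * R := by
          calc dist x Q ≤ dist x z1 + dist z1 Q := dist_triangle _ _ _
          _ < 2 * R + R := by linarith
          _ = 3 * R := by ring
        exact Metric.mem_ball.2 this
      set c₂ := midpoint ℝ p Q' with hc₂
      have hc₂p : dist c₂ p = dist p Q' / 2 := by
        rw [hc₂, dist_midpoint_left, Real.norm_two]; ring
      have hc₂Q' : dist c₂ Q' = dist p Q' / 2 := by
        rw [hc₂, dist_midpoint_right, Real.norm_two]; ring
      have hpQ' : dist p Q' < R := Metric.mem_ball.1 hp2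
      have hS2 : Metric.ball c₂ (R / 2) ⊆ Metric.closedBall z1 (2 * R) := by
        intro x hx
        have h1 : dist x c₂ < R / 2 := Metric.mem_ball.1 hx
        have : dist x z1 ≤ dist x c₂ + dist c₂ p + dist p z1 := dist_triangle4 _ _ _ _
        rw [Metric.mem_closedBall]
        rw [dist_comm z1 p] at hz1p
        rw [hc₂p] at this
        linarith
      obtain ⟨z2, hz2, hz2val⟩ := aux_step_point hsub hneg hint
        (by linarith : (0:ℝ) < 2 * R) hz1Ω
        (by linarith : -((4:ℝ) ^ m * f n + 1) ≤ u z1)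
        (by linarith : (0:ℝ) < R / 2) hS2
      rw [hratio] at hz2val
      refine ⟨z2, ?_, ?_⟩
      · have h1 : dist z2 c₂ < R / 2 := Metric.mem_ball.1 hz2
        have : dist z2 Q' ≤ dist z2 c₂ + dist c₂ Q' := dist_triangle _ _ _
        rw [hc₂Q'] at this
        exact Metric.mem_ball.2 (by linarith)
      · rw [hfsucc]; linarith
  -- conclusion
  intro j
  obtain ⟨z, hz, hzval⟩ := key j.val j.isLt
  have hjq : (⟨j.val, j.isLt⟩ : Fin (k + 1)) = j := by
    apply Fin.ext; rfl
  rw [hjq] at hz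
  -- the ball around q j is inside closedBall z (2R), which is inside Ω
  have hzΩ : Metric.closedBall z (2 * R) ⊆ Ω := by
    refine Set.Subset.trans ?_ (hball j)
    intro x hx
    have h1 : dist x z ≤ 2 * R := Metric.mem_closedBall.1 hx
    have h2 : dist z (q j) < R := Metric.mem_ball.1 hz
    refine Metric.mem_ball.2 ?_
    calc dist x (q j) ≤ dist x z + dist z (q j) := dist_triangle _ _ _
    _ < 2 * R + R := by linarith
    _ = 3 * R := by ring
  have hS : Metric.ball (q j) R ⊆ Metric.closedBall z (2 * R) := by
    intro x hx
    have h1 : dist x (q j) < R := Metric.mem_ball.1 hx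
    have h2 : dist z (q j) < R := Metric.mem_ball.1 hz
    have h3 : dist (q j) z = dist z (q j) := dist_comm _ _
    rw [Metric.mem_closedBall]
    calc dist x z ≤ dist x (q j) + dist (q j) z := dist_triangle _ _ _
    _ ≤ 2 * R := by linarith
  have hstep := aux_step hsub hneg hint (by linarith : (0:ℝ) < 2 * R) hzΩ
    (by linarith : -(f j.val) ≤ u z) hR hS
  have hratio : ((2 * R) / R) = (2 : ℝ) := by field_simp
  rw [hratio] at hstep
  -- convert |u| to -u on the ball
  have habs : ⨍ x in Metric.ball (q j) R, |u x| = ⨍ x in Metric.ball (q j) R, -u x := by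
    apply average_congr
    refine ae_restrict_of_forall_mem measurableSet_ball (fun x hx => ?_)
    have hxΩ : x ∈ Ω := hzΩ (hS hx)
    simp [abs_of_nonpos (hneg x hxΩ)]
  rw [habs, setAverage_eq]
  have hVpos : 0 < (volume (Metric.ball (q j) R)).toReal :=
    ENNReal.toReal_pos (Metric.measure_ball_pos volume _ hR).ne' measure_ball_lt_top.ne
  rw [smul_eq_mul]
  change (volume (Metric.ball (q j) R)).toReal⁻¹ * _ ≤ _
  rw [inv_mul_le_iff₀ hVpos]
  calc ∫ x in Metric.ball (q j) R, -u x
      ≤ (volume (Metric.ball (q j) R)).toReal * ((2:ℝ) ^ m * f j.val) := hstep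
    _ ≤ (volume (Metric.ball (q j) R)).toReal * ((2:ℝ) ^ m * f k) := by
        apply mul_le_mul_of_nonneg_left _ hVpos.le
        apply mul_le_mul_of_nonneg_left (hfmono (Nat.lt_succ_iff.1 j.isLt)) (by positivity)
end

section
/- Fix δ ∈ (0,1), n ≥ 1, and constants C₁', C₂' > 0 with C₄' > C₂'/C₁'. For each t with 0 < |t| < δ^{n} there exists a C² function Φ = Φ_t : ℝ → ℝ which is convex, non-increasing, non-negative, satisfies Φ(x) = 0 for x ≥ log δ, Φ'(x) < 0 for x < log δ, satisfies the differential inequality −(d/dx) log|Φ'(x)| ≥ C₄' max{e^x, e^{−x/n}|t|^{2/n}} for x < log δ, and satisfies a uniform bound |Φ'(x)| ≤ C for all x ≥ 2 log|t|, with C independent of t. -/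
open Real MeasureTheory intervalIntegral Set Filter Topology

lemma expNegInvGlue_monotone : Monotone expNegInvGlue := by
  intro a b hab
  rcases le_or_gt b 0 with hb | hb
  · rw [expNegInvGlue.zero_of_nonpos hb, expNegInvGlue.zero_of_nonpos (hab.trans hb)]
  rcases le_or_gt a 0 with ha | ha
  · rw [expNegInvGlue.zero_of_nonpos ha]; exact (expNegInvGlue.pos_of_pos hb).le
  · rw [expNegInvGlue, expNegInvGlue, if_neg (not_le.2 ha), if_neg (not_le.2 hb)]
    exact exp_le_exp.2 (neg_le_neg (inv_anti₀ ha hab))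

lemma expNegInvGlue_eq_of_pos {x : ℝ} (hx : 0 < x) : expNegInvGlue x = exp (-x⁻¹) := by
  rw [expNegInvGlue, if_neg (not_le.2 hx)]

lemma expNegInvGlue_le_one (x : ℝ) : expNegInvGlue x ≤ 1 := by
  rcases le_or_gt x 0 with hx | hx
  · rw [expNegInvGlue.zero_of_nonpos hx]; norm_num
  · rw [expNegInvGlue_eq_of_pos hx]
    exact exp_le_one_iff.2 (neg_nonpos_of_nonneg (inv_pos.2 hx).le)

/-- existence of the good profile function `Φ_t`: a convex, non-increasing,
non-negative `C²` function vanishing for `x ≥ log δ`, with `Φ' < 0` below `log δ`,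
satisfying `-(d/dx) log|Φ'| ≥ C₄' max{e^x, e^{-x/n} |t|^{2/n}}`, and with `|Φ'|`
bounded on `[2 log|t|, ∞)` by a constant independent of `t`.  Here `t` stands for
the modulus `|t| ∈ (0, δⁿ)`. -/
theorem good_profile_function_exists (n : ℕ) (hn : 1 ≤ n) (δ C₁' C₂' C₄' : ℝ)
    (hδ : 0 < δ) (hδ1 : δ < 1) (hC₁ : 0 < C₁') (hC₂ : 0 < C₂')
    (hC₄ : C₂' / C₁' < C₄') :
    ∃ C : ℝ, ∀ t : ℝ, 0 < t → t < δ ^ n →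
      ∃ Φ : ℝ → ℝ,
        ContDiff ℝ 2 Φ ∧
        ConvexOn ℝ Set.univ Φ ∧
        Antitone Φ ∧
        (∀ x, 0 ≤ Φ x) ∧
        (∀ x, Real.log δ ≤ x → Φ x = 0) ∧
        (∀ x, x < Real.log δ → deriv Φ x < 0) ∧
        (∀ x, x < Real.log δ →
          C₄' * max (Real.exp x) (Real.exp (-x / (n : ℝ)) * t ^ ((2 : ℝ) / (n : ℝ))) ≤
            -(deriv (fun y => Real.log |deriv Φ y|) x)) ∧
        (∀ x, 2 * Real.log t ≤ x → |deriv Φ x| ≤ C) := by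
  have hC₄pos : 0 < C₄' := (div_pos hC₂ hC₁).trans hC₄
  refine ⟨Real.exp (C₄' * (n + 1)), fun t ht ht1 => ?_⟩
  set L : ℝ := Real.log δ with hL
  have hnR : (0:ℝ) < n := by exact_mod_cast hn
  -- the weight function
  set m : ℝ → ℝ := fun s => C₄' * max (Real.exp s) (Real.exp (-s / (n : ℝ)) * t ^ ((2 : ℝ) / (n : ℝ))) with hm
  have hm_cont : Continuous m := by
    apply continuous_const.mul
    exact (Real.continuous_exp.max ((Real.continuous_exp.comp (continuous_id.neg.div_const _)).mul continuous_const))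
  have hm_pos : ∀ s, 0 < m s :=
    fun s => mul_pos hC₄pos (lt_max_of_lt_left (exp_pos s))
  have hm_int : ∀ a b : ℝ, IntervalIntegrable m volume a b :=
    fun a b => hm_cont.intervalIntegrable a b
  set M : ℝ → ℝ := fun x => ∫ s in x..L, m s with hM
  have hM_deriv : ∀ x, HasDerivAt M (-(m x)) x := by
    intro x
    have h1 : HasDerivAt (fun u => ∫ s in L..u, m s) (m x) x :=
      integral_hasDerivAt_right (hm_int L x)
        (hm_cont.stronglyMeasurableAtFilter _ _) hm_cont.continuousAt
    have : M = fun u => -∫ s in L..u, m s := by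
      funext u; simp [hM, intervalIntegral.integral_symm u L]
    rw [this]; exact h1.neg
  have hM_contDiff : ContDiff ℝ 1 M := by
    rw [contDiff_one_iff_deriv]
    refine ⟨fun x => (hM_deriv x).differentiableAt, ?_⟩
    have : deriv M = fun x => -(m x) := funext fun x => (hM_deriv x).deriv
    rw [this]; exact hm_cont.neg
  have hM_antitone : Antitone M := by
    intro a b hab
    have hsplit : (∫ s in a..b, m s) + (∫ s in b..L, m s) = ∫ s in a..L, m s :=
      intervalIntegral.integral_add_adjacent_intervals (hm_int a b) (hm_int b L)
    have : 0 ≤ ∫ s in a..b, m s :=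
      intervalIntegral.integral_nonneg hab (fun s _ => (hm_pos s).le)
    simp only [hM]; linarith
  -- the profile derivative magnitude
  set h : ℝ → ℝ := fun x => expNegInvGlue (L - x) * Real.exp (M x) with hh
  have hh_contDiff : ContDiff ℝ 1 h :=
    (expNegInvGlue.contDiff.comp (contDiff_const.sub contDiff_id)).mul
      (Real.contDiff_exp.of_le le_top |>.comp hM_contDiff)
  have hh_cont : Continuous h := hh_contDiff.continuous
  have hh_nonneg : ∀ x, 0 ≤ h x :=
    fun x => mul_nonneg (expNegInvGlue.nonneg _) (exp_pos _).le
  have hh_zero : ∀ x, L ≤ x → h x = 0 := by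
    intro x hx
    simp [hh, expNegInvGlue.zero_of_nonpos (by linarith : L - x ≤ 0)]
  have hh_pos : ∀ x, x < L → 0 < h x :=
    fun x hx => mul_pos (expNegInvGlue.pos_of_pos (by linarith)) (exp_pos _)
  have hh_antitone : Antitone h := by
    intro a b hab
    exact mul_le_mul (expNegInvGlue_monotone (by linarith : L - b ≤ L - a))
      (exp_le_exp.2 (hM_antitone hab)) (exp_pos _).le (expNegInvGlue.nonneg _)
  have hh_int : ∀ a b : ℝ, IntervalIntegrable h volume a b :=
    fun a b => hh_cont.intervalIntegrable a b
  -- the profile function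
  set Φ : ℝ → ℝ := fun x => ∫ s in x..L, h s with hΦ
  have hΦ_deriv : ∀ x, HasDerivAt Φ (-(h x)) x := by
    intro x
    have h1 : HasDerivAt (fun u => ∫ s in L..u, h s) (h x) x :=
      integral_hasDerivAt_right (hh_int L x)
        (hh_cont.stronglyMeasurableAtFilter _ _) hh_cont.continuousAt
    have : Φ = fun u => -∫ s in L..u, h s := by
      funext u; simp [hΦ, intervalIntegral.integral_symm u L]
    rw [this]; exact h1.neg
  have hΦ_deriv' : deriv Φ = fun x => -(h x) := funext fun x => (hΦ_deriv x).deriv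
  have hΦ_diff : Differentiable ℝ Φ := fun x => (hΦ_deriv x).differentiableAt
  have hΦ_contDiff : ContDiff ℝ 2 Φ := by
    rw [show (2 : WithTop ℕ∞) = 1 + 1 by norm_num, contDiff_succ_iff_deriv]
    refine ⟨hΦ_diff, by simp, ?_⟩
    rw [hΦ_deriv']; exact hh_contDiff.neg
  have hΦ_convex : ConvexOn ℝ Set.univ Φ := by
    refine Monotone.convexOn_univ_of_deriv hΦ_diff ?_
    rw [hΦ_deriv']
    exact fun a b hab => neg_le_neg (hh_antitone hab)
  have hΦ_antitone : Antitone Φ := by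
    intro a b hab
    have hsplit : (∫ s in a..b, h s) + (∫ s in b..L, h s) = ∫ s in a..L, h s :=
      intervalIntegral.integral_add_adjacent_intervals (hh_int a b) (hh_int b L)
    have : 0 ≤ ∫ s in a..b, h s :=
      intervalIntegral.integral_nonneg hab (fun s _ => hh_nonneg s)
    simp only [hΦ]; linarith
  have hΦ_zero : ∀ x, L ≤ x → Φ x = 0 := by
    intro x hx
    have : EqOn h 0 (uIcc x L) := by
      intro s hs
      rw [uIcc_of_ge hx] at hs
      exact hh_zero s hs.1
    simp only [hΦ]
    rw [intervalIntegral.integral_congr this]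
    simp
  have hΦ_nonneg : ∀ x, 0 ≤ Φ x := by
    intro x
    rcases le_or_gt L x with hx | hx
    · exact (hΦ_zero x hx).ge
    · rw [← hΦ_zero L le_rfl]; exact hΦ_antitone hx.le
  have hΦ_deriv_neg : ∀ x, x < L → deriv Φ x < 0 := by
    intro x hx
    rw [hΦ_deriv']
    exact neg_lt_zero.2 (hh_pos x hx)
  -- differential inequality
  have hlogderiv : ∀ x, x < L →
      C₄' * max (Real.exp x) (Real.exp (-x / (n : ℝ)) * t ^ ((2 : ℝ) / (n : ℝ))) ≤
        -(deriv (fun y => Real.log |deriv Φ y|) x) := by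
    intro x hx
    set ψ : ℝ → ℝ := fun y => -(L - y)⁻¹ + M y with hψ
    have hne : L - x ≠ 0 := by intro hc; linarith [sub_eq_zero.1 hc]
    have h1 : HasDerivAt (fun y : ℝ => L - y) (-1) x := (hasDerivAt_id x).const_sub L
    have h2 := ((h1.inv hne).neg).add (hM_deriv x)
    have hψd : HasDerivAt ψ (-((L - x) ^ 2)⁻¹ + -(m x)) x := by
      exact h2.congr_deriv (by ring)
    have heq : (fun y => Real.log |deriv Φ y|) =ᶠ[𝓝 x] ψ := by
      filter_upwards [Iio_mem_nhds hx] with y hy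
      have hy' : (0:ℝ) < L - y := by simpa [sub_pos] using hy
      rw [hΦ_deriv']
      show Real.log |(-h y)| = ψ y
      rw [abs_neg, abs_of_pos (hh_pos y hy)]
      show Real.log (expNegInvGlue (L - y) * Real.exp (M y)) = _
      rw [expNegInvGlue_eq_of_pos hy', ← Real.exp_add, Real.log_exp]
    have hd : HasDerivAt (fun y => Real.log |deriv Φ y|) (-((L - x) ^ 2)⁻¹ + -(m x)) x :=
      hψd.congr_of_eventuallyEq heq
    rw [hd.deriv]
    have : 0 ≤ ((L - x) ^ 2)⁻¹ := by positivity
    have hmx : m x = C₄' * max (Real.exp x) (Real.exp (-x / (n : ℝ)) * t ^ ((2 : ℝ) / (n : ℝ))) := rfl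
    linarith
  -- uniform bound
  have hbound : ∀ x, 2 * Real.log t ≤ x → |deriv Φ x| ≤ Real.exp (C₄' * (n + 1)) := by
    intro x hx
    rw [hΦ_deriv']
    show |(-h x)| ≤ _
    rw [abs_neg, abs_of_nonneg (hh_nonneg x)]
    rcases le_or_gt L x with hLx | hLx
    · rw [hh_zero x hLx]; positivity
    set τ : ℝ := t ^ ((2 : ℝ) / (n : ℝ)) with hτ
    have hτpos : 0 < τ := Real.rpow_pos_of_pos ht _
    set g : ℝ → ℝ := fun s => Real.exp s + Real.exp (-s / (n : ℝ)) * τ with hg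
    have hg_cont : Continuous g := by
      exact Real.continuous_exp.add ((Real.continuous_exp.comp (continuous_id.neg.div_const _)).mul continuous_const)
    have hmg : ∀ s, m s ≤ C₄' * g s := by
      intro s
      refine mul_le_mul_of_nonneg_left ?_ hC₄pos.le
      exact max_le_add_of_nonneg (exp_pos s).le (mul_nonneg (exp_pos _).le hτpos.le)
    have hMg : M x ≤ C₄' * ∫ s in x..L, g s := by
      have h1 : (∫ s in x..L, m s) ≤ ∫ s in x..L, C₄' * g s :=
        intervalIntegral.integral_mono_on hLx.le (hm_int x L)
          ((continuous_const.mul hg_cont).intervalIntegrable x L) (fun s _ => hmg s)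
      have h2 : (∫ s in x..L, C₄' * g s) = C₄' * ∫ s in x..L, g s :=
        intervalIntegral.integral_const_mul _ _
      exact le_of_le_of_eq h1 h2
    -- compute the integral of the second piece
    set F : ℝ → ℝ := fun s => -(n:ℝ) * Real.exp (-s / (n : ℝ)) with hF
    have hFd : ∀ s : ℝ, HasDerivAt F (Real.exp (-s / (n : ℝ))) s := by
      intro s
      have h1 : HasDerivAt (fun u : ℝ => -u / (n:ℝ)) (-1 / (n:ℝ)) s :=
        (hasDerivAt_id s).neg.div_const _
      have h3 := h1.exp.const_mul (-(n:ℝ))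
      exact h3.congr_deriv (by field_simp)
    have hint2 : (∫ s in x..L, Real.exp (-s / (n : ℝ))) = F L - F x :=
      intervalIntegral.integral_eq_sub_of_hasDerivAt (fun s _ => hFd s)
        ((Real.continuous_exp.comp (continuous_id.neg.div_const _)).intervalIntegrable x L)
    have hc1 : IntervalIntegrable (fun s : ℝ => Real.exp s) volume x L :=
      Real.continuous_exp.intervalIntegrable x L
    have hc2 : IntervalIntegrable (fun s : ℝ => Real.exp (-s / (n : ℝ)) * τ) volume x L := by
      apply Continuous.intervalIntegrable
      fun_prop
    have hgsplit : (∫ s in x..L, g s) = (Real.exp L - Real.exp x) + (F L - F x) * τ := by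
      simp only [hg]
      rw [intervalIntegral.integral_add hc1 hc2]
      rw [integral_exp, intervalIntegral.integral_mul_const, hint2]
    -- bounds
    have hexpL : Real.exp L ≤ 1 := by
      rw [hL, Real.exp_log hδ]; linarith
    have hkey : Real.exp (-x / (n : ℝ)) * τ ≤ 1 := by
      have h1 : Real.exp (-x / (n : ℝ)) ≤ Real.exp (-(2 * Real.log t) / (n : ℝ)) := by
        apply Real.exp_le_exp.2
        apply div_le_div_of_nonneg_right (by linarith : -x ≤ -(2 * Real.log t)) hnR.le
      have h2 : Real.exp (-(2 * Real.log t) / (n : ℝ)) * τ = 1 := by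
        rw [hτ, Real.rpow_def_of_pos ht, ← Real.exp_add]
        rw [show -(2 * Real.log t) / (n : ℝ) + Real.log t * (2 / (n : ℝ)) = 0 by ring]
        exact Real.exp_zero
      calc Real.exp (-x / (n : ℝ)) * τ ≤ Real.exp (-(2 * Real.log t) / (n : ℝ)) * τ :=
            mul_le_mul_of_nonneg_right h1 hτpos.le
        _ = 1 := h2
    have hFL : (F L - F x) * τ ≤ (n : ℝ) := by
      have : F L - F x ≤ (n:ℝ) * Real.exp (-x / (n : ℝ)) := by
        rw [hF]
        have : 0 < Real.exp (-L / (n : ℝ)) := exp_pos _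
        nlinarith [exp_pos (-L / (n:ℝ))]
      calc (F L - F x) * τ ≤ ((n:ℝ) * Real.exp (-x / (n : ℝ))) * τ :=
            mul_le_mul_of_nonneg_right this hτpos.le
        _ = (n:ℝ) * (Real.exp (-x / (n : ℝ)) * τ) := by ring
        _ ≤ (n:ℝ) * 1 := mul_le_mul_of_nonneg_left hkey hnR.le
        _ = (n:ℝ) := mul_one _
    have hint_le : (∫ s in x..L, g s) ≤ (n : ℝ) + 1 := by
      rw [hgsplit]
      have := exp_pos x
      linarith
    have hM_le : M x ≤ C₄' * ((n : ℝ) + 1) :=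
      hMg.trans (mul_le_mul_of_nonneg_left hint_le hC₄pos.le)
    calc h x ≤ 1 * Real.exp (M x) :=
          mul_le_mul_of_nonneg_right (expNegInvGlue_le_one _) (exp_pos _).le
      _ = Real.exp (M x) := one_mul _
      _ ≤ Real.exp (C₄' * ((n:ℝ) + 1)) := Real.exp_le_exp.2 hM_le
  exact ⟨Φ, hΦ_contDiff, hΦ_convex, hΦ_antitone, hΦ_nonneg, hΦ_zero, hΦ_deriv_neg, hlogderiv, hbound⟩
end

section
/- Let a_1, …, a_p ≥ 0 with at least one a_i = 0, and let L = |log|t|| for 0 < |t| < 1. Then ∫_{Δ_L} exp(−2 Σ_i a_i y_i) dσ ≤ C(a) L^{m}, where Δ_L = {y ∈ ℝ^p_{≥0} : y_1 + ⋯ + y_p = L} with its (p−1)-dimensional Lebesgue measure dσ, and m = #{i : a_i = 0} − 1, with C(a) independent of L ≥ 1. -/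
set_option maxHeartbeats 1000000

open MeasureTheory

section SimplexBoundAux
open Set
open scoped ENNReal

namespace SimplexBound

noncomputable def Jint (q : ℕ) (a : Fin (q+1) → ℝ) (L : ℝ) : ℝ≥0∞ :=
  ∫⁻ y in {y : Fin q → ℝ | (∀ i, 0 ≤ y i) ∧ ∑ i, y i ≤ L},
    ENNReal.ofReal (Real.exp (-2 * ((∑ i : Fin q, a i.castSucc * y i) +
      a (Fin.last q) * (L - ∑ i, y i))))

lemma measurableSet_S (q : ℕ) (L : ℝ) :
    MeasurableSet {y : Fin q → ℝ | (∀ i, 0 ≤ y i) ∧ ∑ i, y i ≤ L} := by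
  have h1 : MeasurableSet {y : Fin q → ℝ | ∀ i, 0 ≤ y i} := by
    have : {y : Fin q → ℝ | ∀ i, 0 ≤ y i} = ⋂ i, {y : Fin q → ℝ | 0 ≤ y i} := by
      ext y; simp
    rw [this]
    exact MeasurableSet.iInter fun i => measurableSet_le measurable_const (measurable_pi_apply i)
  have h2 : MeasurableSet {y : Fin q → ℝ | ∑ i, y i ≤ L} :=
    measurableSet_le (Finset.measurable_sum _ fun i _ => measurable_pi_apply i) measurable_const
  exact h1.inter h2

lemma measurable_f (q : ℕ) (a : Fin (q+1) → ℝ) (L : ℝ) :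
    Measurable (fun y : Fin q → ℝ => ENNReal.ofReal (Real.exp (-2 * ((∑ i : Fin q, a i.castSucc * y i) +
      a (Fin.last q) * (L - ∑ i, y i))))) := by
  apply Measurable.ennreal_ofReal
  fun_prop

lemma Jint_of_neg {q : ℕ} {a : Fin (q+1) → ℝ} {L : ℝ} (hL : L < 0) : Jint q a L = 0 := by
  have : {y : Fin q → ℝ | (∀ i, 0 ≤ y i) ∧ ∑ i, y i ≤ L} = ∅ := by
    ext y
    simp only [mem_setOf_eq, mem_empty_iff_false, iff_false, not_and]
    intro hy hs
    exact absurd (le_trans (Finset.sum_nonneg fun i _ => hy i) hs) (not_le.mpr hL)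
  rw [Jint, this]
  simp


noncomputable def mn {n : ℕ} (a : Fin (n+1) → ℝ) : ℝ := Finset.univ.inf' Finset.univ_nonempty a

lemma mn_le {n : ℕ} (a : Fin (n+1) → ℝ) (i : Fin (n+1)) : mn a ≤ a i :=
  Finset.inf'_le a (Finset.mem_univ i)

lemma exists_mn {n : ℕ} (a : Fin (n+1) → ℝ) : ∃ i, a i = mn a := by
  obtain ⟨i, _, hi⟩ := Finset.exists_mem_eq_inf' (Finset.univ_nonempty) a
  exact ⟨i, hi.symm⟩

lemma ncard_eq_sum {n : ℕ} (P : Fin n → Prop) [DecidablePred P] :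
    {i | P i}.ncard = ∑ i, if P i then 1 else 0 := by
  classical
  rw [Set.ncard_eq_toFinset_card', Set.toFinset_setOf, Finset.card_filter]

lemma mn_succAbove {q : ℕ} (a : Fin (q+2) → ℝ) (p : Fin (q+2)) :
    mn a = min (a p) (mn (fun j => a (p.succAbove j))) := by
  apply le_antisymm
  · apply le_min (mn_le a p)
    apply Finset.le_inf'
    intro j _
    exact mn_le a _
  · apply Finset.le_inf'
    intro i _
    rcases eq_or_ne i p with rfl | h
    · exact min_le_left _ _
    · obtain ⟨j, hj⟩ := Fin.exists_succAbove_eq h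
      calc min (a p) (mn fun j => a (p.succAbove j)) ≤ mn fun j => a (p.succAbove j) :=
            min_le_right _ _
        _ ≤ a (p.succAbove j) := mn_le _ j
        _ = a i := by rw [hj]

lemma ncard_succAbove {q : ℕ} (a : Fin (q+2) → ℝ) (p : Fin (q+2)) (c : ℝ) :
    {i | a i = c}.ncard = (if a p = c then 1 else 0) + {j | a (p.succAbove j) = c}.ncard := by
  classical
  rw [ncard_eq_sum, ncard_eq_sum, Fin.sum_univ_succAbove (fun i => if a i = c then 1 else 0) p]

lemma lint_exp {ε : ℝ} (hε : 0 < ε) :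
    ∫⁻ t in Ioi (0:ℝ), ENNReal.ofReal (Real.exp (-(ε * t))) = ENNReal.ofReal (1/ε) := by
  rw [← ofReal_integral_eq_lintegral_ofReal]
  · congr 1
    have h := integral_comp_mul_left_Ioi (fun x => Real.exp (-x)) 0 hε
    simp only [mul_zero, smul_eq_mul] at h
    rw [h, integral_exp_neg_Ioi_zero]
    field_simp
  · have h := exp_neg_integrableOn_Ioi 0 hε
    simp only [neg_mul] at h
    exact h
  · filter_upwards with t using Real.exp_nonneg _

lemma poly_le_exp (n : ℕ) {δ : ℝ} (hδ : 0 < δ) :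
    ∃ K : ℝ, 0 < K ∧ ∀ s : ℝ, 0 ≤ s → (1+s)^n ≤ K * Real.exp (δ * s) := by
  rcases Nat.eq_zero_or_pos n with rfl | hn
  · exact ⟨1, one_pos, fun s hs => by
      simpa using Real.one_le_exp (by positivity)⟩
  · set c := δ / n with hc
    have hc0 : 0 < c := by positivity
    refine ⟨(1/c + 1)^n, by positivity, fun s hs => ?_⟩
    have h1 : 1 + s ≤ (1/c + 1) * Real.exp (c * s) := by
      have := Real.add_one_le_exp (c * s)
      calc 1 + s ≤ (1/c + 1) * (1 + c * s) := by
            have h1c : (0:ℝ) < 1/c := by positivity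
            have hcc : (1/c) * c = 1 := by field_simp
            nlinarith [mul_nonneg hc0.le hs, hcc, mul_nonneg h1c.le hc0.le]
        _ ≤ (1/c + 1) * Real.exp (c * s) := by
            apply mul_le_mul_of_nonneg_left (by linarith) (by positivity)
    calc (1+s)^n ≤ ((1/c + 1) * Real.exp (c * s))^n := by
          apply pow_le_pow_left₀ (by linarith) h1 n
      _ = (1/c+1)^n * Real.exp (c * s)^n := mul_pow _ _ _
      _ = (1/c+1)^n * Real.exp (δ * s) := by
          have hns : (n:ℝ) * (c * s) = δ * s := by
            rw [hc]; field_simp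
          rw [← Real.exp_nat_mul, hns]

lemma lint_poly_exp (n : ℕ) {ε : ℝ} (hε : 0 < ε) : ∃ D : ℝ, 0 < D ∧
    ∫⁻ s in Ioi (0:ℝ), ENNReal.ofReal ((1+s)^n * Real.exp (-(ε * s))) ≤ ENNReal.ofReal D := by
  obtain ⟨K, hK, hKs⟩ := poly_le_exp n (half_pos hε)
  refine ⟨K * (1/(ε/2)), by positivity, ?_⟩
  have hb : ∀ s ∈ Ioi (0:ℝ), ENNReal.ofReal ((1+s)^n * Real.exp (-(ε * s)))
      ≤ ENNReal.ofReal K * ENNReal.ofReal (Real.exp (-(ε/2 * s))) := by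
    intro s hs
    rw [← ENNReal.ofReal_mul hK.le]
    apply ENNReal.ofReal_le_ofReal
    have h2 : (1+s)^n ≤ K * Real.exp (ε/2 * s) := hKs s (le_of_lt hs)
    calc (1+s)^n * Real.exp (-(ε * s)) ≤ (K * Real.exp (ε/2 * s)) * Real.exp (-(ε * s)) := by
          apply mul_le_mul_of_nonneg_right h2 (Real.exp_nonneg _)
      _ = K * Real.exp (-(ε/2 * s)) := by
          rw [mul_assoc, ← Real.exp_add]; ring_nf
  calc ∫⁻ s in Ioi (0:ℝ), ENNReal.ofReal ((1+s)^n * Real.exp (-(ε * s)))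
      ≤ ∫⁻ s in Ioi (0:ℝ), ENNReal.ofReal K * ENNReal.ofReal (Real.exp (-(ε/2 * s))) :=
        setLIntegral_mono (by fun_prop) hb
    _ = ENNReal.ofReal K * ∫⁻ s in Ioi (0:ℝ), ENNReal.ofReal (Real.exp (-(ε/2 * s))) :=
        lintegral_const_mul _ (by fun_prop)
    _ = ENNReal.ofReal K * ENNReal.ofReal (1/(ε/2)) := by rw [lint_exp (half_pos hε)]
    _ = ENNReal.ofReal (K * (1/(ε/2))) := (ENNReal.ofReal_mul hK.le).symm



lemma Jint_succ_aux (q : ℕ) (a : Fin (q+2) → ℝ) (a' : Fin (q+1) → ℝ)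
    (hA : ∀ j : Fin q, a' j.castSucc = a (j.castSucc.castSucc))
    (hlast : a' (Fin.last q) = a (Fin.last (q+1))) (L : ℝ) :
    Jint (q+1) a L = ∫⁻ t : ℝ,
      ((Ici (0:ℝ)).indicator (fun s => ENNReal.ofReal (Real.exp (-2 * (a ((Fin.last q).castSucc) * s)))) t) *
        Jint q a' (L - t) := by
  classical
  set S : Set (Fin (q+1) → ℝ) := {y | (∀ i, 0 ≤ y i) ∧ ∑ i, y i ≤ L} with hS
  set f : (Fin (q+1) → ℝ) → ℝ≥0∞ := fun y => ENNReal.ofReal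
    (Real.exp (-2 * ((∑ i : Fin (q+1), a i.castSucc * y i) +
      a (Fin.last (q+1)) * (L - ∑ i, y i)))) with hf
  have hfm : Measurable (S.indicator f) :=
    (measurable_f (q+1) a L).indicator (measurableSet_S _ _)
  set e := MeasurableEquiv.piFinSuccAbove (fun _ : Fin (q+1) => ℝ) (Fin.last q) with he
  have mp : MeasurePreserving e.symm volume volume :=
    (volume_preserving_piFinSuccAbove (fun _ : Fin (q+1) => ℝ) (Fin.last q)).symm
  have step1 : Jint (q+1) a L = ∫⁻ z : ℝ × (Fin q → ℝ), S.indicator f (e.symm z) := by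
    rw [Jint, ← lintegral_indicator (measurableSet_S _ _)]
    exact (mp.lintegral_comp hfm).symm
  -- key pointwise identity
  have key : ∀ t : ℝ, ∀ y' : Fin q → ℝ, S.indicator f (e.symm (t, y')) =
      ((Ici (0:ℝ)).indicator (fun s => ENNReal.ofReal (Real.exp (-2 * (a ((Fin.last q).castSucc) * s)))) t) *
        ({y : Fin q → ℝ | (∀ i, 0 ≤ y i) ∧ ∑ i, y i ≤ L - t}.indicator
          (fun y => ENNReal.ofReal (Real.exp (-2 * ((∑ i : Fin q, a' i.castSucc * y i) +
            a' (Fin.last q) * ((L - t) - ∑ i, y i))))) y') := by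
    intro t y'
    have hesymm : e.symm (t, y') = Fin.snoc y' t := by
      show (Fin.insertNthEquiv (fun _ : Fin (q+1) => ℝ) (Fin.last q)) (t, y') = Fin.snoc y' t
      rw [Fin.insertNthEquiv_last]
      rfl
    rw [hesymm]
    have hsum : ∑ i : Fin (q+1), Fin.snoc y' t i = (∑ j : Fin q, y' j) + t := by
      rw [Fin.sum_univ_castSucc]
      simp [Fin.snoc_castSucc, Fin.snoc_last]
    have hmem : (Fin.snoc y' t : Fin (q+1) → ℝ) ∈ S ↔
        (t ∈ Ici (0:ℝ) ∧ ((∀ i, 0 ≤ y' i) ∧ ∑ i, y' i ≤ L - t)) := by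
      simp only [hS, mem_setOf_eq, mem_Ici]
      constructor
      · rintro ⟨h1, h2⟩
        refine ⟨by simpa using h1 (Fin.last q), fun i => by simpa using h1 i.castSucc, ?_⟩
        rw [hsum] at h2; linarith
      · rintro ⟨ht, h1, h2⟩
        refine ⟨fun i => ?_, by rw [hsum]; linarith⟩
        rcases Fin.eq_castSucc_or_eq_last i with ⟨j, rfl⟩ | rfl
        · simpa using h1 j
        · simpa using ht
    have hval : f (Fin.snoc y' t) =
        ENNReal.ofReal (Real.exp (-2 * (a ((Fin.last q).castSucc) * t))) *
          ENNReal.ofReal (Real.exp (-2 * ((∑ i : Fin q, a' i.castSucc * y' i) +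
            a' (Fin.last q) * ((L - t) - ∑ i, y' i)))) := by
      have hsum2 : ∑ i : Fin (q+1), a i.castSucc * (Fin.snoc y' t : Fin (q+1) → ℝ) i =
          (∑ j : Fin q, a' j.castSucc * y' j) + a ((Fin.last q).castSucc) * t := by
        rw [Fin.sum_univ_castSucc]
        simp only [Fin.snoc_castSucc, Fin.snoc_last]
        congr 1
        apply Finset.sum_congr rfl
        intro j _
        rw [hA j]
      simp only [hf]
      rw [← ENNReal.ofReal_mul (Real.exp_nonneg _), ← Real.exp_add]
      congr 2
      rw [hsum2, hsum, ← hlast]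
      ring
    by_cases hmem' : (Fin.snoc y' t : Fin (q+1) → ℝ) ∈ S
    · obtain ⟨ht, hy⟩ := hmem.mp hmem'
      rw [indicator_of_mem hmem' f, indicator_of_mem ht,
        indicator_of_mem (show y' ∈ {y : Fin q → ℝ | (∀ i, 0 ≤ y i) ∧ ∑ i, y i ≤ L - t} from hy), hval]
    · rw [indicator_of_notMem hmem' f]
      rcases (not_and_or.mp ((not_iff_not.mpr hmem).mp hmem')) with h | h
      · rw [indicator_of_notMem h, zero_mul]
      · rw [indicator_of_notMem
          (show y' ∉ {y : Fin q → ℝ | (∀ i, 0 ≤ y i) ∧ ∑ i, y i ≤ L - t} from h), mul_zero]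
  rw [step1, Measure.volume_eq_prod,
    lintegral_prod (fun z => S.indicator f (e.symm z)) ((hfm.comp e.symm.measurable).aemeasurable)]
  congr 1
  funext t
  rw [lintegral_congr (key t),
    lintegral_const_mul _ ((measurable_f q a' (L-t)).indicator (measurableSet_S _ _)),
    lintegral_indicator (measurableSet_S q (L-t))]
  rfl

lemma Jint_succ (q : ℕ) (a : Fin (q+2) → ℝ) (L : ℝ) :
    Jint (q+1) a L = ∫⁻ t : ℝ,
      ((Ici (0:ℝ)).indicator (fun s => ENNReal.ofReal (Real.exp (-2 * (a ((Fin.last q).castSucc) * s)))) t) *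
        Jint q (fun j => a (((Fin.last q).castSucc : Fin (q+2)).succAbove j)) (L - t) := by
  apply Jint_succ_aux
  · intro j
    show a (((Fin.last q).castSucc : Fin (q+2)).succAbove j.castSucc) = a (j.castSucc.castSucc)
    congr 1
    exact Fin.succAbove_of_castSucc_lt _ _ (by
      simp [Fin.castSucc_lt_castSucc_iff, Fin.castSucc_lt_last])
  · show a (((Fin.last q).castSucc : Fin (q+2)).succAbove (Fin.last q)) = a (Fin.last (q+1))
    congr 1
    rw [Fin.succAbove_of_le_castSucc _ _ (le_refl _), Fin.succ_last]

lemma ncard_mn_pos {n : ℕ} (a : Fin (n+1) → ℝ) : 0 < {i | a i = mn a}.ncard := by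
  obtain ⟨i, hi⟩ := exists_mn a
  exact (Set.ncard_pos (Set.toFinite _)).mpr ⟨i, hi⟩

lemma lint_Icc_le_Ioi (G : ℝ → ℝ≥0∞) (L : ℝ) :
    ∫⁻ t in Icc 0 L, G t ≤ ∫⁻ t in Ioi 0, G t := by
  calc ∫⁻ t in Icc 0 L, G t ≤ ∫⁻ t in Ici 0, G t := lintegral_mono_set Icc_subset_Ici_self
    _ = ∫⁻ t in Ioi 0, G t := by rw [← Measure.restrict_congr_set Ioi_ae_eq_Ici]

lemma Jint_succ_Icc (q : ℕ) (a : Fin (q+2) → ℝ) (L : ℝ) (hL : 0 ≤ L) :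
    Jint (q+1) a L = ∫⁻ t in Icc 0 L,
      ENNReal.ofReal (Real.exp (-2 * (a ((Fin.last q).castSucc) * t))) *
        Jint q (fun j => a (((Fin.last q).castSucc : Fin (q+2)).succAbove j)) (L - t) := by
  rw [Jint_succ q a L]
  set F : ℝ → ℝ≥0∞ := fun t =>
      ((Ici (0:ℝ)).indicator (fun s => ENNReal.ofReal (Real.exp (-2 * (a ((Fin.last q).castSucc) * s)))) t) *
        Jint q (fun j => a (((Fin.last q).castSucc : Fin (q+2)).succAbove j)) (L - t) with hF
  have hsplit : ∫⁻ t, F t = (∫⁻ t in Icc 0 L, F t) + ∫⁻ t in (Icc 0 L)ᶜ, F t :=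
    (lintegral_add_compl F (measurableSet_Icc : MeasurableSet (Icc (0:ℝ) L))).symm
  have hcompl : ∫⁻ t in (Icc 0 L)ᶜ, F t = 0 := by
    rw [← lintegral_indicator measurableSet_Icc.compl]
    have : ((Icc 0 L)ᶜ).indicator F = fun _ => 0 := by
      funext t
      by_cases ht : t ∈ (Icc 0 L)ᶜ
      · rw [indicator_of_mem ht]
        have ht' : ¬(0 ≤ t ∧ t ≤ L) := by simpa [mem_Icc] using ht
        rw [hF]
        simp only
        rcases not_and_or.mp ht' with h | h
        · rw [indicator_of_notMem (by simpa using h), zero_mul]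
        · rw [Jint_of_neg (by push_neg at h; linarith), mul_zero]
      · exact indicator_of_notMem ht F
    rw [this, lintegral_zero]
  have hIcc : ∀ t ∈ Icc (0:ℝ) L, F t =
      ENNReal.ofReal (Real.exp (-2 * (a ((Fin.last q).castSucc) * t))) *
        Jint q (fun j => a (((Fin.last q).castSucc : Fin (q+2)).succAbove j)) (L - t) := by
    intro t ht
    rw [hF]
    simp only
    rw [indicator_of_mem (mem_Ici.mpr (mem_Icc.mp ht).1)]
  rw [hsplit, hcompl, add_zero]
  exact setLIntegral_congr_fun measurableSet_Icc hIcc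

lemma lint_reflect (L : ℝ) (G : ℝ → ℝ≥0∞) (hG : Measurable G) :
    ∫⁻ t in Icc 0 L, G (L - t) = ∫⁻ s in Icc 0 L, G s := by
  have mpres : MeasurePreserving (fun t : ℝ => L - t) volume volume :=
    Measure.measurePreserving_sub_left volume L
  rw [← lintegral_indicator measurableSet_Icc, ← lintegral_indicator measurableSet_Icc]
  have hpt : ∀ t : ℝ, (Icc 0 L).indicator (fun t => G (L - t)) t
      = (Icc 0 L).indicator G (L - t) := by
    intro t
    by_cases ht : t ∈ Icc 0 L
    · rw [indicator_of_mem ht]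
      have h2 : L - t ∈ Icc 0 L := by
        rcases mem_Icc.mp ht with ⟨h1, h2⟩
        exact mem_Icc.mpr ⟨by linarith, by linarith⟩
      rw [indicator_of_mem h2]
    · rw [indicator_of_notMem ht]
      have h2 : L - t ∉ Icc 0 L := by
        intro hmem
        rcases mem_Icc.mp hmem with ⟨h1, h2⟩
        exact ht (mem_Icc.mpr ⟨by linarith, by linarith⟩)
      rw [indicator_of_notMem h2]
  rw [lintegral_congr hpt]
  exact mpres.lintegral_comp (hG.indicator measurableSet_Icc)

lemma Jint_bound : ∀ (q : ℕ) (a : Fin (q+1) → ℝ), ∃ C : ℝ, 0 < C ∧ ∀ L : ℝ, 0 ≤ L →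
    Jint q a L ≤ ENNReal.ofReal (C * (1+L)^({i | a i = mn a}.ncard - 1) *
      Real.exp (-2 * mn a * L)) := by
  intro q
  induction q with
  | zero =>
    intro a
    have hmn : mn a = a (Fin.last 0) := by
      obtain ⟨i, hi⟩ := exists_mn a
      rw [← hi]
      congr 1
      exact Fin.ext (by omega)
    have hcard : {i : Fin 1 | a i = mn a}.ncard = 1 := by
      have hs : {i : Fin 1 | a i = mn a} = {Fin.last 0} := by
        ext i
        have hi : i = Fin.last 0 := Fin.ext (by omega)
        subst hi
        simp [hmn]
      rw [hs, Set.ncard_singleton]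
    refine ⟨1, one_pos, fun L hL => ?_⟩
    have hset : {y : Fin 0 → ℝ | (∀ i, 0 ≤ y i) ∧ ∑ i, y i ≤ L} = univ := by
      ext y
      simp only [mem_setOf_eq, mem_univ, iff_true]
      exact ⟨fun i => i.elim0, by simpa using hL⟩
    rw [Jint, hset, Measure.restrict_univ]
    have hconst : (fun y : Fin 0 → ℝ => ENNReal.ofReal (Real.exp (-2 * ((∑ i : Fin 0, a i.castSucc * y i) +
        a (Fin.last 0) * (L - ∑ i, y i))))) = fun _ => ENNReal.ofReal (Real.exp (-2 * (a (Fin.last 0) * L))) := by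
      funext y
      simp
    rw [hconst, lintegral_const]
    have hvol : (volume : Measure (Fin 0 → ℝ)) univ = 1 := by
      rw [volume_pi, Measure.pi_univ]
      simp
    rw [hvol, mul_one, hcard]
    apply ENNReal.ofReal_le_ofReal
    rw [hmn]
    simp only [pow_zero, one_mul, mul_one]
    apply le_of_eq
    ring_nf
  | succ q IH =>
    intro a
    set p : Fin (q+2) := (Fin.last q).castSucc with hp
    obtain ⟨C', hC', hIH⟩ := IH (fun j => a (p.succAbove j))
    set M' : ℝ := mn (fun j => a (p.succAbove j)) with hM'
    set m' : ℕ := {j | a (p.succAbove j) = M'}.ncard - 1 with hm'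
    have hmin : mn a = min (a p) M' := mn_succAbove a p
    have hcard : {i | a i = mn a}.ncard =
        (if a p = mn a then 1 else 0) + {j | a (p.succAbove j) = mn a}.ncard :=
      ncard_succAbove a p (mn a)
    have hcard' : 0 < {j | a (p.succAbove j) = M'}.ncard := ncard_mn_pos _
    have hm'card : {j | a (p.succAbove j) = M'}.ncard = m' + 1 := by omega
    have hIH2 : ∀ s : ℝ, 0 ≤ s → Jint q (fun j => a (p.succAbove j)) s ≤
        ENNReal.ofReal (C' * (1+s)^m' * Real.exp (-2 * M' * s)) := fun s hs => hIH s hs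
    have hM'le : ∀ j, M' ≤ a (p.succAbove j) := fun j => mn_le _ j
    rcases lt_trichotomy (a p) M' with hlt | heqc | hgt
    · -- a p < M' : minimum is a p, exponent 0
      have hmna : mn a = a p := by rw [hmin, min_eq_left hlt.le]
      have hexp : {i | a i = mn a}.ncard - 1 = 0 := by
        have hempty : {j | a (p.succAbove j) = mn a}.ncard = 0 := by
          have : {j | a (p.succAbove j) = mn a} = ∅ := by
            ext j
            simp only [mem_setOf_eq, mem_empty_iff_false, iff_false]
            intro hj
            have := hM'le j
            rw [hj, hmna] at this
            linarith
          rw [this, Set.ncard_empty]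
        rw [hcard, if_pos hmna.symm, hempty]
      obtain ⟨D, hD, hDle⟩ := lint_poly_exp m' (show (0:ℝ) < 2*(M' - a p) by linarith)
      refine ⟨C' * D, by positivity, fun L hL => ?_⟩
      rw [Jint_succ_Icc q a L hL, hexp]
      have hptw : ∀ t ∈ Icc (0:ℝ) L,
          ENNReal.ofReal (Real.exp (-2 * (a p * t))) *
            Jint q (fun j => a (p.succAbove j)) (L - t) ≤
          ENNReal.ofReal ((C' * Real.exp (-2 * mn a * L)) *
            ((1+(L-t))^m' * Real.exp (-(2*(M' - a p) * (L-t))))) := by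
        intro t ht
        rcases mem_Icc.mp ht with ⟨ht0, htL⟩
        calc ENNReal.ofReal (Real.exp (-2 * (a p * t))) *
              Jint q (fun j => a (p.succAbove j)) (L - t)
            ≤ ENNReal.ofReal (Real.exp (-2 * (a p * t))) *
              ENNReal.ofReal (C' * (1+(L-t))^m' * Real.exp (-2 * M' * (L-t))) :=
              mul_le_mul_right (hIH2 (L-t) (by linarith)) _
          _ = ENNReal.ofReal (Real.exp (-2 * (a p * t)) *
              (C' * (1+(L-t))^m' * Real.exp (-2 * M' * (L-t)))) :=
              (ENNReal.ofReal_mul (Real.exp_nonneg _)).symm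
          _ ≤ ENNReal.ofReal ((C' * Real.exp (-2 * mn a * L)) *
              ((1+(L-t))^m' * Real.exp (-(2*(M' - a p) * (L-t))))) := by
              apply ENNReal.ofReal_le_ofReal
              apply le_of_eq
              rw [hmna]
              rw [show Real.exp (-2 * (a p * t)) * (C' * (1+(L-t))^m' * Real.exp (-2 * M' * (L-t)))
                  = C' * (1+(L-t))^m' * (Real.exp (-2 * (a p * t)) * Real.exp (-2 * M' * (L-t))) from by ring]
              rw [← Real.exp_add,
                show -2 * (a p * t) + -2 * M' * (L - t) = (-2 * (a p) * L) + (-(2*(M' - a p) * (L-t))) from by ring,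
                Real.exp_add]
              ring
      calc ∫⁻ t in Icc 0 L, ENNReal.ofReal (Real.exp (-2 * (a p * t))) *
              Jint q (fun j => a (p.succAbove j)) (L - t)
          ≤ ∫⁻ t in Icc 0 L, ENNReal.ofReal ((C' * Real.exp (-2 * mn a * L)) *
              ((1+(L-t))^m' * Real.exp (-(2*(M' - a p) * (L-t))))) :=
            setLIntegral_mono (by fun_prop) hptw
        _ = ENNReal.ofReal (C' * Real.exp (-2 * mn a * L)) *
            ∫⁻ t in Icc 0 L, ENNReal.ofReal ((1+(L-t))^m' * Real.exp (-(2*(M' - a p) * (L-t)))) := by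
            simp_rw [ENNReal.ofReal_mul (by positivity : (0:ℝ) ≤ C' * Real.exp (-2 * mn a * L))]
            exact lintegral_const_mul _ (by fun_prop)
        _ = ENNReal.ofReal (C' * Real.exp (-2 * mn a * L)) *
            ∫⁻ s in Icc 0 L, ENNReal.ofReal ((1+s)^m' * Real.exp (-(2*(M' - a p) * s))) := by
            rw [lint_reflect L (fun s => ENNReal.ofReal ((1+s)^m' * Real.exp (-(2*(M' - a p) * s))))
              (by fun_prop)]
        _ ≤ ENNReal.ofReal (C' * Real.exp (-2 * mn a * L)) * ENNReal.ofReal D := by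
            apply mul_le_mul_right
            exact le_trans (lint_Icc_le_Ioi _ L) hDle
        _ ≤ ENNReal.ofReal (C' * D * (1+L)^0 * Real.exp (-2 * mn a * L)) := by
            rw [← ENNReal.ofReal_mul (by positivity)]
            apply ENNReal.ofReal_le_ofReal
            apply le_of_eq
            ring
    · -- a p = M' : minimum attained also at p, exponent m' + 1
      have hmna : mn a = M' := by rw [hmin, heqc, min_self]
      have hexp : {i | a i = mn a}.ncard - 1 = m' + 1 := by
        rw [hcard, if_pos (by rw [hmna, heqc]), hmna, hm'card]
        omega
      refine ⟨C', hC', fun L hL => ?_⟩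
      rw [Jint_succ_Icc q a L hL, hexp]
      have hptw : ∀ t ∈ Icc (0:ℝ) L,
          ENNReal.ofReal (Real.exp (-2 * (a p * t))) *
            Jint q (fun j => a (p.succAbove j)) (L - t) ≤
          ENNReal.ofReal (C' * (1+L)^m' * Real.exp (-2 * mn a * L)) := by
        intro t ht
        rcases mem_Icc.mp ht with ⟨ht0, htL⟩
        calc ENNReal.ofReal (Real.exp (-2 * (a p * t))) *
              Jint q (fun j => a (p.succAbove j)) (L - t)
            ≤ ENNReal.ofReal (Real.exp (-2 * (a p * t))) *
              ENNReal.ofReal (C' * (1+(L-t))^m' * Real.exp (-2 * M' * (L-t))) :=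
              mul_le_mul_right (hIH2 (L-t) (by linarith)) _
          _ = ENNReal.ofReal (Real.exp (-2 * (a p * t)) *
              (C' * (1+(L-t))^m' * Real.exp (-2 * M' * (L-t)))) :=
              (ENNReal.ofReal_mul (Real.exp_nonneg _)).symm
          _ ≤ ENNReal.ofReal (C' * (1+L)^m' * Real.exp (-2 * mn a * L)) := by
              apply ENNReal.ofReal_le_ofReal
              rw [show Real.exp (-2 * (a p * t)) * (C' * (1+(L-t))^m' * Real.exp (-2 * M' * (L-t)))
                  = C' * (1+(L-t))^m' * (Real.exp (-2 * (a p * t)) * Real.exp (-2 * M' * (L-t))) from by ring]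
              rw [← Real.exp_add,
                show -2 * (a p * t) + -2 * M' * (L - t) = -2 * mn a * L from by rw [hmna, ← heqc]; ring]
              have hpow : (1+(L-t))^m' ≤ (1+L)^m' :=
                pow_le_pow_left₀ (by linarith) (by linarith) m'
              apply mul_le_mul_of_nonneg_right _ (Real.exp_nonneg _)
              exact mul_le_mul_of_nonneg_left hpow hC'.le
      calc ∫⁻ t in Icc 0 L, ENNReal.ofReal (Real.exp (-2 * (a p * t))) *
              Jint q (fun j => a (p.succAbove j)) (L - t)
          ≤ ∫⁻ t in Icc 0 L, ENNReal.ofReal (C' * (1+L)^m' * Real.exp (-2 * mn a * L)) :=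
            setLIntegral_mono (by fun_prop) hptw
        _ = ENNReal.ofReal (C' * (1+L)^m' * Real.exp (-2 * mn a * L)) * volume (Icc (0:ℝ) L) :=
            setLIntegral_const _ _
        _ = ENNReal.ofReal (C' * (1+L)^m' * Real.exp (-2 * mn a * L)) * ENNReal.ofReal (L - 0) := by
            rw [Real.volume_Icc]
        _ ≤ ENNReal.ofReal (C' * (1+L)^(m'+1) * Real.exp (-2 * mn a * L)) := by
            rw [← ENNReal.ofReal_mul (by positivity)]
            apply ENNReal.ofReal_le_ofReal
            rw [pow_succ]
            have h1 : L - 0 ≤ 1 + L := by linarith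
            calc C' * (1+L)^m' * Real.exp (-2 * mn a * L) * (L - 0)
                ≤ C' * (1+L)^m' * Real.exp (-2 * mn a * L) * (1 + L) := by
                  apply mul_le_mul_of_nonneg_left h1 (by positivity)
              _ = C' * ((1+L)^m' * (1+L)) * Real.exp (-2 * mn a * L) := by ring
    · -- M' < a p : minimum is M', exponent m'
      have hmna : mn a = M' := by rw [hmin, min_eq_right hgt.le]
      have hexp : {i | a i = mn a}.ncard - 1 = m' := by
        have hne : ¬ (a p = mn a) := by rw [hmna]; exact ne_of_gt hgt
        rw [hcard, if_neg hne, hmna]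
        omega
      refine ⟨C' * (1/(2*(a p - M'))), mul_pos hC' (one_div_pos.mpr (by linarith)), fun L hL => ?_⟩
      rw [Jint_succ_Icc q a L hL, hexp]
      have hptw : ∀ t ∈ Icc (0:ℝ) L,
          ENNReal.ofReal (Real.exp (-2 * (a p * t))) *
            Jint q (fun j => a (p.succAbove j)) (L - t) ≤
          ENNReal.ofReal ((C' * (1+L)^m' * Real.exp (-2 * mn a * L)) *
            Real.exp (-(2*(a p - M') * t))) := by
        intro t ht
        rcases mem_Icc.mp ht with ⟨ht0, htL⟩
        calc ENNReal.ofReal (Real.exp (-2 * (a p * t))) *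
              Jint q (fun j => a (p.succAbove j)) (L - t)
            ≤ ENNReal.ofReal (Real.exp (-2 * (a p * t))) *
              ENNReal.ofReal (C' * (1+(L-t))^m' * Real.exp (-2 * M' * (L-t))) :=
              mul_le_mul_right (hIH2 (L-t) (by linarith)) _
          _ = ENNReal.ofReal (Real.exp (-2 * (a p * t)) *
              (C' * (1+(L-t))^m' * Real.exp (-2 * M' * (L-t)))) :=
              (ENNReal.ofReal_mul (Real.exp_nonneg _)).symm
          _ ≤ ENNReal.ofReal ((C' * (1+L)^m' * Real.exp (-2 * mn a * L)) *
              Real.exp (-(2*(a p - M') * t))) := by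
              apply ENNReal.ofReal_le_ofReal
              rw [show Real.exp (-2 * (a p * t)) * (C' * (1+(L-t))^m' * Real.exp (-2 * M' * (L-t)))
                  = C' * (1+(L-t))^m' * (Real.exp (-2 * (a p * t)) * Real.exp (-2 * M' * (L-t))) from by ring]
              rw [← Real.exp_add,
                show -2 * (a p * t) + -2 * M' * (L - t) = (-2 * M' * L) + (-(2*(a p - M') * t)) from by ring,
                Real.exp_add, hmna]
              have hpow : (1+(L-t))^m' ≤ (1+L)^m' :=
                pow_le_pow_left₀ (by linarith) (by linarith) m'
              calc C' * (1+(L-t))^m' * (Real.exp (-2 * M' * L) * Real.exp (-(2*(a p - M') * t)))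
                  ≤ C' * (1+L)^m' * (Real.exp (-2 * M' * L) * Real.exp (-(2*(a p - M') * t))) := by
                    apply mul_le_mul_of_nonneg_right _ (by positivity)
                    exact mul_le_mul_of_nonneg_left hpow hC'.le
                _ = C' * (1+L)^m' * Real.exp (-2 * M' * L) * Real.exp (-(2*(a p - M') * t)) := by ring
      calc ∫⁻ t in Icc 0 L, ENNReal.ofReal (Real.exp (-2 * (a p * t))) *
              Jint q (fun j => a (p.succAbove j)) (L - t)
          ≤ ∫⁻ t in Icc 0 L, ENNReal.ofReal ((C' * (1+L)^m' * Real.exp (-2 * mn a * L)) *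
              Real.exp (-(2*(a p - M') * t))) :=
            setLIntegral_mono (by fun_prop) hptw
        _ = ENNReal.ofReal (C' * (1+L)^m' * Real.exp (-2 * mn a * L)) *
            ∫⁻ t in Icc 0 L, ENNReal.ofReal (Real.exp (-(2*(a p - M') * t))) := by
            simp_rw [ENNReal.ofReal_mul (by positivity : (0:ℝ) ≤ C' * (1+L)^m' * Real.exp (-2 * mn a * L))]
            exact lintegral_const_mul _ (by fun_prop)
        _ ≤ ENNReal.ofReal (C' * (1+L)^m' * Real.exp (-2 * mn a * L)) *
            ENNReal.ofReal (1/(2*(a p - M'))) := by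
            apply mul_le_mul_right
            calc ∫⁻ t in Icc 0 L, ENNReal.ofReal (Real.exp (-(2*(a p - M') * t)))
                ≤ ∫⁻ t in Ioi 0, ENNReal.ofReal (Real.exp (-(2*(a p - M') * t))) :=
                  lint_Icc_le_Ioi _ L
              _ = ENNReal.ofReal (1/(2*(a p - M'))) := lint_exp (by linarith)
        _ ≤ ENNReal.ofReal ((C' * (1/(2*(a p - M')))) * (1+L)^m' * Real.exp (-2 * mn a * L)) := by
            rw [← ENNReal.ofReal_mul (by positivity)]
            apply ENNReal.ofReal_le_ofReal
            apply le_of_eq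
            ring

end SimplexBound

end SimplexBoundAux

/-- `∫_{Δ_L} e^{-2 Σ aᵢ yᵢ} dσ ≤ C(a) L^m` for `L ≥ 1`, where
`Δ_L = {y ∈ ℝ^p_{≥0} : Σ yᵢ = L}` carries its `(p-1)`-dimensional Lebesgue surface
measure and `m = #{i : aᵢ = 0} - 1`.  The simplex is parametrised by its projection to
the first `p - 1` coordinates (`p = q + 1`, last coordinate `L - Σ yᵢ`), the surface
measure being `√p` times the projected Lebesgue measure. -/
theorem simplex_surface_integral_bound (q : ℕ) (a : Fin (q + 1) → ℝ)
    (ha : ∀ i, 0 ≤ a i) (h0 : ∃ i, a i = 0) :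
    ∃ C : ℝ, 0 < C ∧ ∀ L : ℝ, 1 ≤ L →
      Real.sqrt (q + 1) *
        ∫ y in {y : Fin q → ℝ | (∀ i, 0 ≤ y i) ∧ ∑ i, y i ≤ L},
          Real.exp (-2 * ((∑ i : Fin q, a i.castSucc * y i) +
            a (Fin.last q) * (L - ∑ i, y i)))
      ≤ C * L ^ ({i | a i = 0}.ncard - 1) := by
  obtain ⟨C, hC, hB⟩ := SimplexBound.Jint_bound q a
  have hmn0 : SimplexBound.mn a = 0 := by
    obtain ⟨i, hi⟩ := h0
    apply le_antisymm
    · rw [← hi]; exact SimplexBound.mn_le a i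
    · exact Finset.le_inf' _ _ (fun j _ => ha j)
  refine ⟨Real.sqrt (q+1) * C * 2^({i | a i = 0}.ncard - 1) + 1, by positivity, fun L hL => ?_⟩
  have hL0 : (0:ℝ) ≤ L := by linarith
  have hJ := hB L hL0
  rw [hmn0] at hJ
  rw [show (-2:ℝ) * 0 * L = 0 by ring, Real.exp_zero, mul_one] at hJ
  have hint : (∫ y in {y : Fin q → ℝ | (∀ i, 0 ≤ y i) ∧ ∑ i, y i ≤ L},
      Real.exp (-2 * ((∑ i : Fin q, a i.castSucc * y i) + a (Fin.last q) * (L - ∑ i, y i))))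
      = (SimplexBound.Jint q a L).toReal := by
    rw [SimplexBound.Jint, integral_eq_lintegral_of_nonneg_ae]
    · exact (Filter.Eventually.of_forall fun y => Real.exp_nonneg _)
    · exact (by fun_prop : Measurable fun y : Fin q → ℝ => Real.exp (-2 * ((∑ i : Fin q, a i.castSucc * y i) +
        a (Fin.last q) * (L - ∑ i, y i)))).aestronglyMeasurable
  rw [hint]
  set m : ℕ := {i | a i = 0}.ncard - 1 with hm
  have htoReal : (SimplexBound.Jint q a L).toReal ≤ C * (1+L)^m := by
    have h2 := ENNReal.toReal_mono ENNReal.ofReal_ne_top hJ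
    rwa [ENNReal.toReal_ofReal (by positivity)] at h2
  have hpow : (1+L)^m ≤ 2^m * L^m := by
    rw [← mul_pow]
    exact pow_le_pow_left₀ (by linarith) (by linarith) m
  calc Real.sqrt (q+1) * (SimplexBound.Jint q a L).toReal
      ≤ Real.sqrt (q+1) * (C * (1+L)^m) :=
        mul_le_mul_of_nonneg_left htoReal (Real.sqrt_nonneg _)
    _ ≤ Real.sqrt (q+1) * (C * (2^m * L^m)) := by
        apply mul_le_mul_of_nonneg_left _ (Real.sqrt_nonneg _)
        exact mul_le_mul_of_nonneg_left hpow hC.le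
    _ = (Real.sqrt (q+1) * C * 2^m) * L^m := by ring
    _ ≤ (Real.sqrt (q+1) * C * 2^m + 1) * L^m := by
        apply mul_le_mul_of_nonneg_right _ (by positivity)
        linarith
end
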